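/- If K is a finite simplicial complex on vertex set V whose Alexander dual relative to V is the full simplex on some subset (i.e., K^* = Δ^d for some d), then K = ∂τ ∗ Δ^d where τ = Δ(V − V_{Δ^d}); consequently K is an elementary starring (τ,v)Δ^{d+dim(τ)} of a simplex, i.e., a vertex-minimal combinatorial ball that is not a simplex. -/

import Mathlib

/-- A (finite) simplicial complex is represented as a finite set of faces
(finite sets of natural-number vertices). -/
abbrev Cx : Type := Finset (Finset ℕ)

/-- `K` is a simplicial complex: closed under taking subsets of faces. -/
def IsComplex (K : Cx) : Prop := ∀ σ ∈ K, ∀ τ ⊆ σ, τ ∈ K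

/-- Vertex set of a complex. -/
def verts (K : Cx) : Finset ℕ := K.sup id

/-- The full simplex on a vertex set `V` (all subsets). -/
def simplexOn (V : Finset ℕ) : Cx := V.powerset

/-- The boundary of the simplex on `V` (all proper subsets). -/
def boundaryOn (V : Finset ℕ) : Cx := V.powerset.erase V

/-- Alexander dual of `K` relative to a ground vertex set `V`. -/
def dual (K : Cx) (V : Finset ℕ) : Cx := V.powerset.filter (fun σ => V \ σ ∉ K)

/-- Alexander dual of `K` relative to its own vertex set. -/
def dualSelf (K : Cx) : Cx := dual K (verts K)

/-- Iterated Alexander dual, each dual taken relative to the current vertex set. -/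
def iterDual : ℕ → Cx → Cx
  | 0, K => K
  | m + 1, K => dualSelf (iterDual m K)

/-- Join of two complexes (on disjoint vertex sets). -/
def join (K L : Cx) : Cx := (K ×ˢ L).image fun p => p.1 ∪ p.2

/-- Link of a face `σ` in `K`. -/
def link (σ : Finset ℕ) (K : Cx) : Cx :=
  K.filter fun τ => τ ∩ σ = ∅ ∧ τ ∪ σ ∈ K

/-- Star of a face `σ` in `K`. -/
def star (σ : Finset ℕ) (K : Cx) : Cx := K.filter fun τ => τ ∪ σ ∈ K

/-- Deletion of a vertex. -/
def del (v : ℕ) (K : Cx) : Cx := K.filter fun σ => v ∉ σ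

/-- The facets (maximal = principal faces) of `K`. -/
def facets (K : Cx) : Cx := K.filter fun σ => ∀ τ ∈ K, σ ⊆ τ → σ = τ

/-- Number of principal simplices. -/
def mCount (K : Cx) : ℕ := (facets K).card

/-- `K.sup card`, i.e. `dim K + 1`. -/
def topCard (K : Cx) : ℕ := K.sup Finset.card

/-- Dimension of a complex, as an integer (so that `dim {∅} = -1`). -/
def dimC (K : Cx) : ℤ := (topCard K : ℤ) - 1

/-- `L` is a top generated subcomplex of `K`. -/
def topGen (L K : Cx) : Prop := L ⊆ K ∧ facets L ⊆ facets K

/-- The boundary complex: generated by the ridges ((d-1)-faces) contained in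
exactly one facet of top dimension. -/
def bd (K : Cx) : Cx :=
  (K.filter fun σ => σ.card + 1 = topCard K ∧
    (K.filter fun τ => τ.card = topCard K ∧ σ ⊆ τ).card = 1).biUnion Finset.powerset

/-- Simplicial isomorphism of complexes. -/
def Iso (K L : Cx) : Prop :=
  ∃ f : ℕ → ℕ, Set.InjOn f ↑(verts K) ∧ K.image (Finset.image f) = L

/-- Elementary starring `(τ, a) K`: remove the faces containing `τ` and replace
`st(τ,K) = τ * lk(τ,K)` by `a * ∂τ * lk(τ,K)`. -/
def starringOp (τ : Finset ℕ) (a : ℕ) (K : Cx) : Cx :=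
  K.filter (fun σ => ¬ τ ⊆ σ) ∪
    join (simplexOn {a}) (join (boundaryOn τ) (link τ K))

/-- One stellar subdivision step. -/
inductive SubdivStep : Cx → Cx → Prop where
  | mk (K : Cx) (τ : Finset ℕ) (a : ℕ) : τ ∈ K → τ ≠ ∅ → a ∉ verts K →
      SubdivStep K (starringOp τ a K)

/-- `Subdiv K K'` : `K'` is obtained from `K` by stellar subdivisions. -/
def Subdiv : Cx → Cx → Prop := Relation.ReflTransGen SubdivStep

/-- Stellar equivalence (by Alexander's theorem, this is PL-isomorphism):
the equivalence relation generated by stellar subdivisions and simplicial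
isomorphisms. -/
def StellarEquiv : Cx → Cx → Prop :=
  Relation.EqvGen (fun K L => SubdivStep K L ∨ Iso K L)

/-- A combinatorial `d`-ball: a complex PL-isomorphic to the `d`-simplex. -/
def CombBall (d : ℕ) (B : Cx) : Prop :=
  StellarEquiv B (simplexOn (Finset.range (d + 1)))

/-- A combinatorial `d`-sphere: a complex PL-isomorphic to `∂Δ^{d+1}`. -/
def CombSphere (d : ℕ) (S : Cx) : Prop :=
  StellarEquiv S (boundaryOn (Finset.range (d + 2)))

/-- An elementary collapse step through a free face. -/
def CollapseStep (K L : Cx) : Prop :=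
  ∃ σ τ : Finset ℕ, σ ∈ K ∧ τ ∈ K ∧ σ ⊆ τ ∧ σ.card + 1 = τ.card ∧
    (∀ ρ ∈ K, σ ⊆ ρ → ρ = σ ∨ ρ = τ) ∧ L = K \ {σ, τ}

/-- Simplicial collapse. -/
def CollapsesTo : Cx → Cx → Prop := Relation.ReflTransGen CollapseStep

/-- A complex is collapsible if it has a (stellar) subdivision which collapses
to a single vertex. -/
def Collapsible (K : Cx) : Prop :=
  ∃ K', Subdiv K K' ∧ ∃ v : ℕ, CollapsesTo K' ({∅, {v}} : Cx)

mutual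
/-- Non-homogeneous manifold of dimension `d` (inductive definition via links:
every vertex link is an NH-ball or an NH-sphere of smaller dimension; the
`(-1)`-dimensional NH-sphere is the complex `{∅}`). -/
def NHManifold : ℕ → Cx → Prop
  | 0 => fun K => IsComplex K ∧ K.Nonempty ∧ topCard K = 1
  | (d + 1) => fun K => IsComplex K ∧ topCard K = d + 2 ∧
      ∀ v ∈ verts K,
        link {v} K = ({∅} : Cx) ∨
        (∃ k, ∃ _ : k ≤ d, NHBall k (link {v} K)) ∨
        (∃ k, ∃ _ : k ≤ d, ∃ j, ∃ _ : j ≤ k, NHSphereH k j (link {v} K))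
  termination_by d => 3 * d
  decreasing_by all_goals omega

/-- Non-homogeneous ball of dimension `d`: a collapsible NH-manifold. -/
def NHBall : ℕ → Cx → Prop
  | 0 => fun K => ∃ v : ℕ, K = ({∅, {v}} : Cx)
  | (d + 1) => fun K => NHManifold (d + 1) K ∧ Collapsible K
  termination_by d => 3 * d + 1
  decreasing_by all_goals omega

/-- Non-homogeneous sphere of dimension `d` and homotopy dimension `k`:
an NH-manifold `S` admitting a decomposition `S = B + L` with `B` a top
generated NH-ball of dimension `d`, `L` a top generated combinatorial
`k`-ball and `B ∩ L = ∂L`. -/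
def NHSphereH : ℕ → ℕ → Cx → Prop
  | d, k => fun S => NHManifold d S ∧ ∃ B L : Cx,
      NHBall d B ∧ topGen B S ∧ CombBall k L ∧ topGen L S ∧
      B ∪ L = S ∧ B ∩ L = bd L
  termination_by d k => 3 * d + 2
  decreasing_by all_goals omega
end

/-- `S = B + L` is a decomposition of the `d`-dimensional NH-sphere `S` of
homotopy dimension `k`. -/
def SphereDecomp (d k : ℕ) (S B L : Cx) : Prop :=
  NHManifold d S ∧ NHBall d B ∧ topGen B S ∧ CombBall k L ∧ topGen L S ∧
    B ∪ L = S ∧ B ∩ L = bd L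

/-- A minimal NH-sphere of dimension `d`: an NH-sphere whose number of maximal
faces equals its homotopy dimension plus `2`. -/
def MinNHSphereD (d : ℕ) (S : Cx) : Prop :=
  ∃ k : ℕ, NHSphereH d k S ∧ mCount S = k + 2

/-- A minimal NH-sphere (of any dimension, including the `(-1)`-sphere `{∅}`). -/
def MinNHSphere (S : Cx) : Prop :=
  S = ({∅} : Cx) ∨ ∃ d : ℕ, MinNHSphereD d S

/-- A minimal NH-ball of dimension `d`: an NH-ball `B` taking part in a
decomposition `S = B + L` of a minimal NH-sphere. -/
def MinNHBall (d : ℕ) (B : Cx) : Prop :=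
  ∃ (k : ℕ) (S L : Cx), SphereDecomp d k S B L ∧ mCount S = k + 2

lemma subset_verts {K : Cx} {σ : Finset ℕ} (h : σ ∈ K) : σ ⊆ verts K :=
  Finset.le_sup (f := id) h

lemma verts_simplexOn (W : Finset ℕ) : verts (simplexOn W) = W := by
  apply le_antisymm
  · exact Finset.sup_le fun σ hσ => Finset.mem_powerset.mp hσ
  · exact Finset.le_sup (f := id) (Finset.mem_powerset.mpr le_rfl)

lemma join_boundary_simplex {τ D : Finset ℕ} (hdisj : Disjoint τ D) :
    join (boundaryOn τ) (simplexOn D)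
      = (τ ∪ D).powerset.filter (fun σ => ¬ τ ⊆ σ) := by
  ext σ
  simp only [join, Finset.mem_image, Finset.mem_product, Finset.mem_filter,
    Finset.mem_powerset, boundaryOn, simplexOn, Finset.mem_erase, Prod.exists]
  constructor
  · rintro ⟨β, δ, ⟨⟨hβne, hβ⟩, hδ⟩, rfl⟩
    refine ⟨Finset.union_subset_union hβ hδ, fun hτ => hβne ?_⟩
    symm; apply Finset.Subset.antisymm _ hβ
    intro x hx
    rcases Finset.mem_union.mp (hτ hx) with h | h
    · exact h
    · exact absurd (hδ h) (fun hD => Finset.disjoint_left.mp hdisj hx hD)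
  · rintro ⟨hσ, hτσ⟩
    refine ⟨σ ∩ τ, σ \ τ, ⟨⟨fun h => hτσ ?_, Finset.inter_subset_right⟩, ?_⟩,
      sup_inf_sdiff σ τ⟩
    · intro x hx
      exact (Finset.mem_inter.mp (h.symm ▸ hx)).1
    · intro x hx
      rcases Finset.mem_sdiff.mp hx with ⟨hxσ, hxτ⟩
      rcases Finset.mem_union.mp (hσ hxσ) with h | h
      · exact absurd h hxτ
      · exact h

lemma join_singleton_filter {W τ' : Finset ℕ} {a : ℕ} (ha : a ∉ W) (haτ : a ∉ τ') :
    join (simplexOn {a}) (W.powerset.filter (fun σ => ¬ τ' ⊆ σ))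
      = (insert a W).powerset.filter (fun σ => ¬ τ' ⊆ σ) := by
  ext σ
  simp only [join, Finset.mem_image, Finset.mem_product, Finset.mem_filter,
    Finset.mem_powerset, simplexOn, Prod.exists]
  constructor
  · rintro ⟨ε, ρ, ⟨hε, hρ, hτρ⟩, rfl⟩
    refine ⟨?_, fun h => hτρ ?_⟩
    · intro x hx
      rcases Finset.mem_union.mp hx with h | h
      · exact Finset.mem_insert.mpr (Or.inl (Finset.mem_singleton.mp (hε h)))
      · exact Finset.mem_insert.mpr (Or.inr (hρ h))
    · intro x hx
      rcases Finset.mem_union.mp (h hx) with h' | h'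
      · exact absurd (Finset.mem_singleton.mp (hε h') ▸ hx) haτ
      · exact h'
  · rintro ⟨hσ, hτσ⟩
    refine ⟨σ ∩ {a}, σ \ {a}, ⟨Finset.inter_subset_right, ?_, fun h => hτσ ?_⟩,
      sup_inf_sdiff σ {a}⟩
    · intro x hx
      rcases Finset.mem_sdiff.mp hx with ⟨hxσ, hxa⟩
      rcases Finset.mem_insert.mp (hσ hxσ) with h | h
      · exact absurd (Finset.mem_singleton.mpr h) hxa
      · exact h
    · exact h.trans Finset.sdiff_subset

lemma link_simplexOn {W τ' : Finset ℕ} (hτW : τ' ⊆ W) :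
    link τ' (simplexOn W) = simplexOn (W \ τ') := by
  ext ρ
  simp only [link, simplexOn, Finset.mem_filter, Finset.mem_powerset]
  constructor
  · rintro ⟨hρ, hint, -⟩
    exact Finset.subset_sdiff.mpr ⟨hρ, Finset.disjoint_iff_inter_eq_empty.mpr hint⟩
  · intro h
    rcases Finset.subset_sdiff.mp h with ⟨h1, h2⟩
    exact ⟨h1, Finset.disjoint_iff_inter_eq_empty.mp h2, Finset.union_subset h1 hτW⟩

lemma starringOp_simplex {W τ' : Finset ℕ} {a : ℕ} (hτW : τ' ⊆ W) (ha : a ∉ W) :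
    starringOp τ' a (simplexOn W)
      = (insert a W).powerset.filter (fun σ => ¬ τ' ⊆ σ) := by
  have hdisj : Disjoint τ' (W \ τ') := Finset.disjoint_sdiff
  have h1 : join (boundaryOn τ') (simplexOn (W \ τ'))
      = W.powerset.filter (fun σ => ¬ τ' ⊆ σ) := by
    rw [join_boundary_simplex hdisj, Finset.union_sdiff_of_subset hτW]
  rw [starringOp, link_simplexOn hτW, h1,
    join_singleton_filter ha (fun h => ha (hτW h))]
  apply Finset.union_eq_right.mpr
  intro σ hσ
  rcases Finset.mem_filter.mp hσ with ⟨h2, h3⟩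
  exact Finset.mem_filter.mpr
    ⟨Finset.mem_powerset.mpr ((Finset.mem_powerset.mp h2).trans (Finset.subset_insert a W)), h3⟩

lemma image_filter_compl {V τ : Finset ℕ} {f : ℕ → ℕ} (hinj : Set.InjOn f ↑V)
    (hτ : τ ⊆ V) :
    (V.powerset.filter (fun σ => ¬ τ ⊆ σ)).image (Finset.image f)
      = (V.image f).powerset.filter (fun σ => ¬ τ.image f ⊆ σ) := by
  ext ρ
  simp only [Finset.mem_image, Finset.mem_filter, Finset.mem_powerset]
  constructor
  · rintro ⟨σ, ⟨hσ, hτσ⟩, rfl⟩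
    refine ⟨Finset.image_subset_image hσ, fun h => hτσ ?_⟩
    intro x hx
    rcases Finset.mem_image.mp (h (Finset.mem_image_of_mem f hx)) with ⟨y, hy, hyx⟩
    rwa [hinj (hσ hy) (hτ hx) hyx] at hy
  · rintro ⟨hρ, hτρ⟩
    refine ⟨V.filter (fun v => f v ∈ ρ), ⟨Finset.filter_subset _ _, fun h => hτρ ?_⟩, ?_⟩
    · intro y hy
      rcases Finset.mem_image.mp hy with ⟨x, hx, rfl⟩
      exact (Finset.mem_filter.mp (h hx)).2
    · ext y
      simp only [Finset.mem_image, Finset.mem_filter]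
      constructor
      · rintro ⟨x, ⟨-, hx⟩, rfl⟩; exact hx
      · intro hy
        rcases Finset.mem_image.mp (hρ hy) with ⟨x, hx, rfl⟩
        exact ⟨x, ⟨hx, hy⟩, rfl⟩

lemma sort_indexOf (s : Finset ℕ) :
    Set.InjOn (fun v => (s.sort (· ≤ ·)).idxOf v) ↑s ∧
      s.image (fun v => (s.sort (· ≤ ·)).idxOf v) = Finset.range s.card := by
  set l := s.sort (· ≤ ·) with hl
  have hmem : ∀ v, v ∈ s ↔ v ∈ l := fun v => (Finset.mem_sort _).symm
  have hlen : l.length = s.card := Finset.length_sort _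
  have hinj : Set.InjOn (fun v => l.idxOf v) ↑s := by
    intro a ha b hb hab
    exact (List.idxOf_inj ((hmem a).mp ha)).mp hab
  refine ⟨hinj, ?_⟩
  apply Finset.eq_of_subset_of_card_le
  · intro x hx
    rcases Finset.mem_image.mp hx with ⟨v, hv, rfl⟩
    exact Finset.mem_range.mpr (hlen ▸ List.idxOf_lt_length_iff.mpr ((hmem v).mp hv))
  · rw [Finset.card_range, Finset.card_image_of_injOn hinj]

/-- if `K^* = Δ^d` then `K = ∂τ * Δ^d` where `τ = Δ(V_K - V_{Δ^d})`;
consequently `K` is (isomorphic to) an elementary starring `(τ,v)Δ^{d + dim τ}` of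
a simplex, i.e. a vertex-minimal combinatorial ball which is not a simplex. -/
theorem stmt10 (K : Cx) (D : Finset ℕ) (d : ℕ) (hK : IsComplex K)
    (hne : K.Nonempty) (hD : D.card = d + 1) (hdual : dualSelf K = simplexOn D) :
    K = join (boundaryOn (verts K \ D)) (simplexOn D) ∧
      (∃ (τ' : Finset ℕ) (a : ℕ),
        τ' ⊆ Finset.range (d + (verts K \ D).card) ∧ τ' ≠ ∅ ∧
        a ∉ Finset.range (d + (verts K \ D).card) ∧
        Iso K (starringOp τ' a (simplexOn (Finset.range (d + (verts K \ D).card))))) ∧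
      CombBall (d + (verts K \ D).card - 1) K ∧
      (verts K).card ≤ (d + (verts K \ D).card - 1) + 2 ∧
      ¬ ∃ W : Finset ℕ, K = simplexOn W := by
  classical
  set V := verts K with hV
  have hiff : ∀ σ : Finset ℕ, (σ ⊆ V ∧ V \ σ ∉ K) ↔ σ ⊆ D := by
    intro σ
    have h := Finset.ext_iff.mp hdual σ
    simpa [dualSelf, dual, simplexOn, Finset.mem_filter, Finset.mem_powerset, ← hV] using h
  have hDV : D ⊆ V := ((hiff D).mpr le_rfl).1
  have hτK : V \ D ∉ K := ((hiff D).mpr le_rfl).2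
  have hempty : ∅ ∈ K := by
    obtain ⟨σ, hσ⟩ := hne
    exact hK σ hσ ∅ (Finset.empty_subset σ)
  have hτne : V \ D ≠ ∅ := fun h => hτK (h ▸ hempty)
  have hKeq : K = V.powerset.filter (fun σ => ¬ (V \ D) ⊆ σ) := by
    ext ρ
    simp only [Finset.mem_filter, Finset.mem_powerset]
    constructor
    · intro hρ
      exact ⟨subset_verts hρ, fun h => hτK (hK ρ hρ _ h)⟩
    · rintro ⟨hρV, hτρ⟩
      have h1 : ¬ (V \ ρ ⊆ D) := by
        intro h
        apply hτρ
        intro x hx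
        rcases Finset.mem_sdiff.mp hx with ⟨hxV, hxD⟩
        by_contra hxρ
        exact hxD (h (Finset.mem_sdiff.mpr ⟨hxV, hxρ⟩))
      by_contra hρK
      exact h1 ((hiff (V \ ρ)).mp ⟨Finset.sdiff_subset,
        by rwa [Finset.sdiff_sdiff_eq_self hρV]⟩)
  set t := (V \ D).card with ht
  have ht1 : 1 ≤ t := Finset.card_pos.mpr (Finset.nonempty_iff_ne_empty.mpr hτne)
  have hVcard : V.card = t + (d + 1) := by
    rw [← Finset.card_sdiff_add_card_eq_card hDV, hD]
  set n := d + t with hn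
  have hpart1 : K = join (boundaryOn (V \ D)) (simplexOn D) := by
    rw [join_boundary_simplex Finset.sdiff_disjoint, Finset.sdiff_union_of_subset hDV]
    exact hKeq
  obtain ⟨hinjτ, himgτ⟩ := sort_indexOf (V \ D)
  obtain ⟨hinjD, himgD⟩ := sort_indexOf D
  set f : ℕ → ℕ := fun v => if v ∈ V \ D then ((V \ D).sort (· ≤ ·)).idxOf v
    else t + (D.sort (· ≤ ·)).idxOf v with hf
  have hfτ : ∀ v ∈ V \ D, f v = ((V \ D).sort (· ≤ ·)).idxOf v := fun v hv => if_pos hv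
  have hfD : ∀ v ∈ D, f v = t + (D.sort (· ≤ ·)).idxOf v := fun v hv =>
    if_neg (fun h => (Finset.mem_sdiff.mp h).2 hv)
  have himτ : (V \ D).image f = Finset.range t := by
    rw [Finset.image_congr (fun v hv => hfτ v hv)]
    exact himgτ
  have hinjτf : ∀ a ∈ V \ D, ∀ b ∈ V \ D, f a = f b → a = b := by
    intro a ha b hb hab
    rw [hfτ a ha, hfτ b hb] at hab
    exact hinjτ (Finset.mem_coe.mpr ha) (Finset.mem_coe.mpr hb) hab
  have hinjDf : ∀ a ∈ D, ∀ b ∈ D, f a = f b → a = b := by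
    intro a ha b hb hab
    rw [hfD a ha, hfD b hb] at hab
    exact hinjD (Finset.mem_coe.mpr ha) (Finset.mem_coe.mpr hb) (Nat.add_left_cancel hab)
  have hlt : ∀ v ∈ V \ D, f v < t := by
    intro v hv
    rw [hfτ v hv]
    have h := List.idxOf_lt_length_iff.mpr ((Finset.mem_sort (α := ℕ) (· ≤ ·)).mpr hv)
    rwa [Finset.length_sort] at h
  have hge : ∀ v ∈ D, t ≤ f v := fun v hv => by rw [hfD v hv]; omega
  have himD : D.image f = Finset.range (n + 1) \ Finset.range t := by
    apply Finset.eq_of_subset_of_card_le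
    · intro x hx
      rcases Finset.mem_image.mp hx with ⟨v, hv, rfl⟩
      have h2 : (D.sort (· ≤ ·)).idxOf v < d + 1 := by
        have h := List.idxOf_lt_length_iff.mpr ((Finset.mem_sort (α := ℕ) (· ≤ ·)).mpr hv)
        rwa [Finset.length_sort, hD] at h
      rw [hfD v hv]
      simp only [Finset.mem_sdiff, Finset.mem_range]
      omega
    · have hc1 : (Finset.range (n + 1) \ Finset.range t).card = d + 1 := by
        rw [Finset.card_sdiff_of_subset (Finset.range_subset_range.mpr (by omega)),
          Finset.card_range, Finset.card_range]
        omega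
      have hc2 : (D.image f).card = d + 1 := by
        rw [Finset.card_image_of_injOn (fun a ha b hb hab =>
          hinjDf a (Finset.mem_coe.mp ha) b (Finset.mem_coe.mp hb) hab), hD]
      omega
  have hVsplit : V \ D ∪ D = V := Finset.sdiff_union_of_subset hDV
  have hinjV : Set.InjOn f ↑V := by
    intro a ha b hb hab
    have ha' := Finset.mem_coe.mp ha
    have hb' := Finset.mem_coe.mp hb
    by_cases haD : a ∈ D <;> by_cases hbD : b ∈ D
    · exact hinjDf a haD b hbD hab
    · have hbτ : b ∈ V \ D := Finset.mem_sdiff.mpr ⟨hb', hbD⟩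
      exact absurd hab (by have := hlt b hbτ; have := hge a haD; omega)
    · have haτ : a ∈ V \ D := Finset.mem_sdiff.mpr ⟨ha', haD⟩
      exact absurd hab (by have := hlt a haτ; have := hge b hbD; omega)
    · exact hinjτf a (Finset.mem_sdiff.mpr ⟨ha', haD⟩) b (Finset.mem_sdiff.mpr ⟨hb', hbD⟩) hab
  have himV : V.image f = Finset.range (n + 1) := by
    rw [← hVsplit, Finset.image_union, himτ, himD,
      Finset.union_sdiff_of_subset (Finset.range_subset_range.mpr (by omega))]
  have hstar : starringOp (Finset.range t) n (simplexOn (Finset.range n))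
      = (Finset.range (n + 1)).powerset.filter (fun σ => ¬ Finset.range t ⊆ σ) := by
    rw [starringOp_simplex (Finset.range_subset_range.mpr (by omega)) Finset.notMem_range_self,
      ← Finset.range_add_one]
  have himgK : K.image (Finset.image f)
      = starringOp (Finset.range t) n (simplexOn (Finset.range n)) := by
    rw [hstar, hKeq, image_filter_compl hinjV Finset.sdiff_subset, himV, himτ]
  have hiso : Iso K (starringOp (Finset.range t) n (simplexOn (Finset.range n))) :=
    ⟨f, hinjV, himgK⟩
  have hrne : (Finset.range t : Finset ℕ) ≠ ∅ :=
    Finset.nonempty_iff_ne_empty.mp (Finset.nonempty_range_iff.mpr (by omega))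
  have hstep : SubdivStep (simplexOn (Finset.range n))
      (starringOp (Finset.range t) n (simplexOn (Finset.range n))) := by
    refine SubdivStep.mk _ _ _ ?_ hrne ?_
    · exact Finset.mem_powerset.mpr (Finset.range_subset_range.mpr (by omega))
    · rw [verts_simplexOn]; exact Finset.notMem_range_self
  have hcb : CombBall (n - 1) K := by
    show StellarEquiv K (simplexOn (Finset.range ((n - 1) + 1)))
    have hn1 : n - 1 + 1 = n := by omega
    rw [hn1]
    exact Relation.EqvGen.trans _ _ _ (Relation.EqvGen.rel _ _ (Or.inr hiso))
      (Relation.EqvGen.symm _ _ (Relation.EqvGen.rel _ _ (Or.inl hstep)))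
  refine ⟨hpart1, ⟨Finset.range t, n, Finset.range_subset_range.mpr (by omega), hrne,
    Finset.notMem_range_self, hiso⟩, hcb, by omega, ?_⟩
  rintro ⟨W, hW⟩
  have hVW : V = W := by rw [hV, hW, verts_simplexOn]
  have hVK : V ∈ K := by
    rw [hW]
    exact Finset.mem_powerset.mpr (le_of_eq hVW)
  exact hτK (hK V hVK (V \ D) Finset.sdiff_subset)
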